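/- Let Ω ⊆ ℝ² be compact convex with nonempty interior, let K ⊆ Ω be compact convex with nonempty interior, let s, t ∈ frontier K with s ≠ t, let ε > 0 with t ∉ Metric.closedBall s ε, and let Γ ⊆ ℝ² satisfy frontier K ∩ Metric.closedBall s ε ⊆ Γ (the protected part contains a neighborhood of s in the network). Define Conn'(θ,ρ) := ∃ connected S ⊆ frontier K with s, t ∈ S and (S \ Γ) ∩ R(θ,ρ) = ∅, and Conn(θ,ρ) := ∃ connected S ⊆ frontier K with s, t ∈ S and S ∩ R(θ,ρ) = ∅. Then volume{(θ,ρ) ∈ [0,2π) × ℝ : G(θ,ρ) ∩ Ω ≠ ∅ ∧ ¬Conn'(θ,ρ)} < volume{(θ,ρ) ∈ [0,2π) × ℝ : G(θ,ρ) ∩ Ω ≠ ∅ ∧ ¬Conn(θ,ρ)}. (Theorem 4(1) of the paper for a convex two-route network: protection of a part containing the terminal s strictly improves the probability of connecting s and t over the weakest arrangement.) -/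

import Mathlib

set_option maxHeartbeats 2000000

open MeasureTheory Real Set Bornology Topology Filter
open scoped InnerProductSpace

noncomputable def u (θ : ℝ) : EuclideanSpace ℝ (Fin 2) :=
  !₂[Real.cos θ, Real.sin θ]

/-- The (directed) line with normal direction `u θ` at signed distance `ρ`. -/
def G (θ ρ : ℝ) : Set (EuclideanSpace ℝ (Fin 2)) :=
  {x | ⟪x, u θ⟫_ℝ = ρ}

/-- The disaster area: the closed half-plane to the `u θ` side of the line `G θ ρ`. -/
def R (θ ρ : ℝ) : Set (EuclideanSpace ℝ (Fin 2)) :=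
  {x | ⟪x, u θ⟫_ℝ ≥ ρ}

/-- Support integral: integral of the support function over all directions;
equals the perimeter of the convex hull. -/
noncomputable def P (X : Set (EuclideanSpace ℝ (Fin 2))) : ℝ :=
  ∫ θ in (0:ℝ)..(2 * Real.pi), sSup {r : ℝ | ∃ x ∈ X, r = ⟪x, u θ⟫_ℝ}

lemma inner_u (x : EuclideanSpace ℝ (Fin 2)) (θ : ℝ) :
    ⟪x, u θ⟫_ℝ = x 0 * Real.cos θ + x 1 * Real.sin θ := by
  simp [u, PiLp.inner_apply, Fin.sum_univ_two, RCLike.inner_apply, conj_trivial]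
  ring

lemma u_smul_basis (θ : ℝ) :
    u θ = Real.cos θ • (EuclideanSpace.single 0 (1:ℝ)) + Real.sin θ • (EuclideanSpace.single 1 (1:ℝ)) := by
  ext i
  fin_cases i <;> simp [u, EuclideanSpace.single_apply]

lemma continuous_u : Continuous u := by
  rw [funext u_smul_basis]
  exact (Real.continuous_cos.smul continuous_const).add (Real.continuous_sin.smul continuous_const)

lemma norm_sq_decomp (x : EuclideanSpace ℝ (Fin 2)) (θ : ℝ) :
    ‖x‖ ^ 2 = ⟪x, u θ⟫_ℝ ^ 2 + ⟪x, u (θ + π/2)⟫_ℝ ^ 2 := by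
  have h := Real.sin_sq_add_cos_sq θ
  have hx : ‖x‖ ^ 2 = x 0 ^ 2 + x 1 ^ 2 := by
    rw [← real_inner_self_eq_norm_sq]
    simp only [PiLp.inner_apply, Fin.sum_univ_two, RCLike.inner_apply, conj_trivial]
    ring
  rw [hx, inner_u, inner_u, Real.cos_add_pi_div_two, Real.sin_add_pi_div_two]
  nlinarith [h]

lemma u_decomp (θ α : ℝ) :
    u (θ + α) = Real.cos α • u θ + Real.sin α • u (θ + π/2) := by
  ext i
  fin_cases i <;>
    simp [u, Real.cos_add, Real.sin_add, Real.cos_add_pi_div_two, Real.sin_add_pi_div_two] <;>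
    ring

lemma exists_angle (a b : ℝ) (h : a ^ 2 + b ^ 2 = 1) :
    ∃ φ : ℝ, -π ≤ φ ∧ φ ≤ π ∧ Real.cos φ = a ∧ Real.sin φ = b := by
  have ha1 : -1 ≤ a := by nlinarith
  have ha2 : a ≤ 1 := by nlinarith
  rcases le_or_gt 0 b with hb | hb
  · refine ⟨Real.arccos a, by linarith [Real.arccos_nonneg a, Real.pi_pos], Real.arccos_le_pi a, Real.cos_arccos ha1 ha2, ?_⟩
    rw [Real.sin_arccos]
    rw [show (1:ℝ) - a ^ 2 = b ^ 2 by linarith, Real.sqrt_sq hb]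
  · refine ⟨-Real.arccos a, by linarith [Real.arccos_le_pi a], by linarith [Real.arccos_nonneg a, Real.pi_pos], by rw [Real.cos_neg]; exact Real.cos_arccos ha1 ha2, ?_⟩
    rw [Real.sin_neg, Real.sin_arccos]
    rw [show (1:ℝ) - a ^ 2 = b ^ 2 by linarith, Real.sqrt_sq_eq_abs, abs_of_nonpos hb.le]
    ring

lemma norm_u (θ : ℝ) : ‖u θ‖ = 1 := by
  have h : ⟪u θ, u θ⟫_ℝ = 1 := by
    rw [inner_u]
    show Real.cos θ * Real.cos θ + Real.sin θ * Real.sin θ = 1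
    nlinarith [Real.sin_sq_add_cos_sq θ]
  have h2 : ‖u θ‖ ^ 2 = 1 := by rw [← real_inner_self_eq_norm_sq, h]
  nlinarith [norm_nonneg (u θ)]

lemma u_ne_zero (θ : ℝ) : u θ ≠ 0 := by
  intro h
  have := norm_u θ
  rw [h, norm_zero] at this
  norm_num at this

lemma cos_angle_uu (a b : ℝ) : ⟪u a, u b⟫_ℝ = Real.cos (a - b) := by
  rw [inner_u, Real.cos_sub]
  show Real.cos a * Real.cos b + Real.sin a * Real.sin b = _
  ring

lemma u_eq_of_sub_int_mul (φ : ℝ) (k : ℤ) : u (φ - k * (2 * π)) = u φ := by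
  ext i
  fin_cases i <;> simp [u, Real.cos_sub_int_mul_two_pi, Real.sin_sub_int_mul_two_pi]

/-- Key topological lemma: the part of the frontier of a planar convex body on one
side of a line through an interior point is connected. -/
lemma connected_cut {K : Set (EuclideanSpace ℝ (Fin 2))} (hKc : IsCompact K)
    (hKconv : Convex ℝ K) {z : EuclideanSpace ℝ (Fin 2)} (hz : z ∈ interior K)
    (v : EuclideanSpace ℝ (Fin 2)) :
    IsConnected (frontier K ∩ {x | ⟪x - z, v⟫_ℝ ≤ 0}) := by
  set C : Set (EuclideanSpace ℝ (Fin 2)) := (fun x => z + x) ⁻¹' K with hC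
  have hCconv : Convex ℝ C := hKconv.translate_preimage_right z
  have hC0 : C ∈ 𝓝 (0 : EuclideanSpace ℝ (Fin 2)) := by
    have : K ∈ 𝓝 z := mem_interior_iff_mem_nhds.mp hz
    have hcont : ContinuousAt (fun x : EuclideanSpace ℝ (Fin 2) => z + x) 0 :=
      (continuous_const.add continuous_id).continuousAt
    have := hcont.preimage_mem_nhds (by simpa using this)
    simpa using this
  have hCb : IsVonNBounded ℝ C := by
    apply NormedSpace.isVonNBounded_of_isBounded
    have : IsBounded K := hKc.isBounded
    obtain ⟨r, hr⟩ := this.subset_closedBall 0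
    apply (Metric.isBounded_closedBall (x := (0:EuclideanSpace ℝ (Fin 2))) (r := r + ‖z‖)).subset
    intro x hx
    have := hr hx
    simp only [Metric.mem_closedBall, dist_zero_right] at this ⊢
    have : ‖z + x‖ ≤ r := this
    calc ‖x‖ = ‖(z + x) - z‖ := by rw [add_sub_cancel_left]
    _ ≤ ‖z + x‖ + ‖z‖ := norm_sub_le _ _
    _ ≤ r + ‖z‖ := by linarith
  have habs : Absorbent ℝ C := absorbent_nhds_zero hC0
  have hfr : ∀ y, gauge C y = 1 ↔ y ∈ frontier C := fun y =>
    gauge_eq_one_iff_mem_frontier hCconv hC0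
  have hfrC : ∀ y : EuclideanSpace ℝ (Fin 2), y ∈ frontier C ↔ z + y ∈ frontier K := by
    intro y
    have : frontier C = (Homeomorph.addLeft z) ⁻¹' frontier K := by
      rw [Homeomorph.preimage_frontier]
      rfl
    rw [this]
    rfl
  have hgpos : ∀ θ : ℝ, 0 < gauge C (u θ) := fun θ =>
    (gauge_pos habs hCb).mpr (u_ne_zero θ)
  have hgcont : Continuous (gauge C) := continuous_gauge hCconv hC0
  set F : ℝ → EuclideanSpace ℝ (Fin 2) := fun a => z + (gauge C (u a))⁻¹ • u a with hF
  have hFcont : Continuous F := by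
    apply continuous_const.add
    exact ((hgcont.comp continuous_u).inv₀ (fun a => (hgpos a).ne')).smul continuous_u
  have hFfr : ∀ a, F a ∈ frontier K := by
    intro a
    have h1 : gauge C ((gauge C (u a))⁻¹ • u a) = 1 := by
      rw [gauge_smul_of_nonneg (inv_nonneg.mpr (hgpos a).le), smul_eq_mul,
        inv_mul_cancel₀ (hgpos a).ne']
    exact (hfrC _).mp ((hfr _).mp h1)
  have hFinner : ∀ a, ⟪F a - z, v⟫_ℝ = (gauge C (u a))⁻¹ * ⟪u a, v⟫_ℝ := by
    intro a
    rw [hF]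
    simp only [add_sub_cancel_left]
    rw [real_inner_smul_left]
  -- surjectivity
  have hsurj : ∀ y ∈ frontier K, ∃ φ : ℝ, -π ≤ φ ∧ φ ≤ π ∧ F φ = y ∧
      u φ = ‖y - z‖⁻¹ • (y - z) := by
    intro y hy
    have hyC : y - z ∈ frontier C := by
      rw [hfrC]
      simpa using hy
    have hyz : y - z ≠ 0 := by
      intro h
      have h0 : (0 : EuclideanSpace ℝ (Fin 2)) ∈ frontier C := h ▸ hyC
      have h1 : (0 : EuclideanSpace ℝ (Fin 2)) ∈ interior C := by
        rw [mem_interior_iff_mem_nhds]; exact hC0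
      exact h0.2 h1
    have hg1 : gauge C (y - z) = 1 := (hfr _).mpr hyC
    set n : ℝ := ‖y - z‖ with hn
    have hnpos : 0 < n := norm_pos_iff.mpr hyz
    set w : EuclideanSpace ℝ (Fin 2) := n⁻¹ • (y - z) with hw
    have hwn : ‖w‖ = 1 := by
      rw [hw, norm_smul, norm_inv, Real.norm_eq_abs, abs_of_pos hnpos]
      exact inv_mul_cancel₀ hnpos.ne'
    have hwsq : w 0 ^ 2 + w 1 ^ 2 = 1 := by
      have h2 : ⟪w, w⟫_ℝ = 1 := by
        rw [real_inner_self_eq_norm_sq, hwn]; norm_num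
      rw [← h2]
      simp only [PiLp.inner_apply, Fin.sum_univ_two, RCLike.inner_apply, conj_trivial]
      ring
    obtain ⟨φ, hφ1, hφ2, hφc, hφs⟩ := exists_angle (w 0) (w 1) hwsq
    have huw : u φ = w := by
      ext i
      fin_cases i <;> simp [u, hφc, hφs]
    have hgw : gauge C (u φ) = n⁻¹ := by
      rw [huw, hw, gauge_smul_of_nonneg (inv_nonneg.mpr hnpos.le), hg1, smul_eq_mul, mul_one]
    refine ⟨φ, hφ1, hφ2, ?_, huw⟩
    show z + (gauge C (u φ))⁻¹ • u φ = y
    rw [hgw, inv_inv, huw, hw, smul_smul, mul_inv_cancel₀ hnpos.ne', one_smul]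
    abel
  -- now: the target set is the image of an interval under F
  obtain ⟨β, hβv⟩ : ∃ β : ℝ, ∀ a : ℝ, ⟪u a, v⟫_ℝ = ‖v‖ * Real.cos (a - β) := by
    rcases eq_or_ne v 0 with hv | hv
    · exact ⟨0, fun a => by simp [hv]⟩
    · have hvn : (0:ℝ) < ‖v‖ := norm_pos_iff.mpr hv
      have hsq : (‖v‖⁻¹ • v) 0 ^ 2 + (‖v‖⁻¹ • v) 1 ^ 2 = 1 := by
        have h2 : ⟪‖v‖⁻¹ • v, ‖v‖⁻¹ • v⟫_ℝ = 1 := by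
          rw [real_inner_self_eq_norm_sq, norm_smul, norm_inv, Real.norm_eq_abs,
            abs_of_pos hvn, inv_mul_cancel₀ hvn.ne']
          norm_num
        rw [← h2]
        simp only [PiLp.inner_apply, Fin.sum_univ_two, RCLike.inner_apply, conj_trivial]
        ring
      obtain ⟨β, _, _, hβc, hβs⟩ := exists_angle _ _ hsq
      have huβ : u β = ‖v‖⁻¹ • v := by
        ext i
        fin_cases i <;> simp [u, hβc, hβs]
      refine ⟨β, fun a => ?_⟩
      have hvv : v = ‖v‖ • u β := by
        rw [huβ, smul_smul, mul_inv_cancel₀ hvn.ne', one_smul]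
      have h7 : ⟪u a, v⟫_ℝ = ⟪u a, ‖v‖ • u β⟫_ℝ := by rw [← hvv]
      rw [h7, real_inner_smul_right, cos_angle_uu]
  -- the domain interval
  rcases eq_or_ne v 0 with hv | hv
  · -- whole frontier; use interval [-π, π]
    have himg : frontier K ∩ {x | ⟪x - z, v⟫_ℝ ≤ 0} = F '' (Icc (-π) π) := by
      apply Subset.antisymm
      · rintro x ⟨hx, -⟩
        obtain ⟨φ, h1, h2, h3, -⟩ := hsurj x hx
        exact ⟨φ, ⟨h1, h2⟩, h3⟩
      · rintro x ⟨φ, -, rfl⟩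
        exact ⟨hFfr φ, by simp [hv]⟩
    rw [himg]
    apply IsConnected.image
    · exact ⟨⟨0, by constructor <;> linarith [Real.pi_pos]⟩, isPreconnected_Icc⟩
    · exact hFcont.continuousOn
  · have hvn : (0:ℝ) < ‖v‖ := norm_pos_iff.mpr hv
    have himg : frontier K ∩ {x | ⟪x - z, v⟫_ℝ ≤ 0} = F '' (Icc (β + π/2) (β + 3*π/2)) := by
      apply Subset.antisymm
      · rintro x ⟨hx, hxv⟩
        obtain ⟨φ, h1, h2, h3, h4⟩ := hsurj x hx
        have hnpos : 0 < ‖x - z‖ := by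
          rcases eq_or_ne (x - z) 0 with h | h
          · exfalso
            have := h4
            rw [h] at this
            simp at this
            exact u_ne_zero φ this
          · exact norm_pos_iff.mpr h
        have hcos : Real.cos (φ - β) ≤ 0 := by
          have h5 : ⟪u φ, v⟫_ℝ = ‖x - z‖⁻¹ * ⟪x - z, v⟫_ℝ := by
            rw [h4, real_inner_smul_left]
          have h6 : ⟪u φ, v⟫_ℝ ≤ 0 :=
            h5 ▸ mul_nonpos_of_nonneg_of_nonpos (inv_nonneg.mpr hnpos.le) hxv
          rw [hβv φ] at h6
          nlinarith
        -- reduce φ - β mod 2π into [0, 2π), it must lie in [π/2, 3π/2]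
        set m : ℝ := φ - β with hm
        set k : ℤ := ⌊m / (2 * π)⌋ with hk
        have h2pi : (0:ℝ) < 2 * π := by linarith [Real.pi_pos]
        have hm0 : 0 ≤ m - k * (2 * π) := Int.sub_floor_div_mul_nonneg m h2pi
        have hm1 : m - k * (2 * π) < 2 * π := Int.sub_floor_div_mul_lt m h2pi
        have hcos' : Real.cos (m - k * (2 * π)) ≤ 0 := by
          rw [Real.cos_sub_int_mul_two_pi]; exact hcos
        have hrange : π/2 ≤ m - k * (2 * π) ∧ m - k * (2 * π) ≤ 3*π/2 := by
          constructor
          · by_contra h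
            push_neg at h
            have : 0 < Real.cos (m - k * (2 * π)) :=
              Real.cos_pos_of_mem_Ioo ⟨by linarith, by linarith⟩
            linarith
          · by_contra h
            push_neg at h
            have : 0 < Real.cos (m - k * (2 * π) - 2 * π) :=
              Real.cos_pos_of_mem_Ioo ⟨by linarith, by linarith [Real.pi_pos]⟩
            rw [Real.cos_sub_two_pi] at this
            linarith
        refine ⟨β + (m - k * (2 * π)), ⟨by linarith [hrange.1], by linarith [hrange.2]⟩, ?_⟩
        have : β + (m - k * (2 * π)) = φ - k * (2 * π) := by rw [hm]; ring
        rw [this]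
        have hueq : u (φ - k * (2 * π)) = u φ := u_eq_of_sub_int_mul φ k
        show z + (gauge C (u (φ - k * (2 * π))))⁻¹ • u (φ - k * (2 * π)) = x
        rw [hueq]
        exact h3
      · rintro x ⟨a, ⟨ha1, ha2⟩, rfl⟩
        refine ⟨hFfr a, ?_⟩
        have hcos : Real.cos (a - β) ≤ 0 :=
          Real.cos_nonpos_of_pi_div_two_le_of_le (by linarith) (by linarith)
        have : ⟪F a - z, v⟫_ℝ = (gauge C (u a))⁻¹ * (‖v‖ * Real.cos (a - β)) := by
          rw [hFinner, hβv]
        rw [mem_setOf_eq, this]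
        apply mul_nonpos_of_nonneg_of_nonpos (inv_nonneg.mpr (hgpos a).le)
        exact mul_nonpos_of_nonneg_of_nonpos (norm_nonneg v) hcos
    rw [himg]
    apply IsConnected.image
    · exact ⟨⟨β + π/2, by constructor <;> linarith [Real.pi_pos]⟩, isPreconnected_Icc⟩
    · exact hFcont.continuousOn

lemma conv_subset_closure_interior {E : Type*} [NormedAddCommGroup E] [NormedSpace ℝ E]
    {K : Set E} (hKconv : Convex ℝ K) {z₀ : E} (hz₀ : z₀ ∈ interior K) :
    K ⊆ closure (interior K) := by
  intro x hx
  have hseq : Tendsto (fun n : ℕ => (1 / (n + 1) : ℝ) • z₀ + (1 - 1 / (n + 1) : ℝ) • x)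
      atTop (𝓝 x) := by
    have h0 : Tendsto (fun n : ℕ => (1 / (n + 1) : ℝ)) atTop (𝓝 0) :=
      tendsto_one_div_add_atTop_nhds_zero_nat
    have h1 : Tendsto (fun n : ℕ => (1 - 1 / (n + 1) : ℝ)) atTop (𝓝 1) := by
      simpa using tendsto_const_nhds.sub h0
    have := (h0.smul_const z₀).add (h1.smul_const x)
    simpa using this
  apply mem_closure_of_tendsto hseq
  filter_upwards with n
  refine hKconv.combo_interior_closure_mem_interior hz₀ (subset_closure hx) ?_ ?_ (by ring)
  · positivity
  · have : (1:ℝ) / (n + 1) ≤ 1 := by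
      rw [div_le_one (by positivity)]
      linarith
    linarith

lemma support_at_frontier {K : Set (EuclideanSpace ℝ (Fin 2))}
    (hKconv : Convex ℝ K) {s z₀ : EuclideanSpace ℝ (Fin 2)}
    (hz₀ : z₀ ∈ interior K) (hs : s ∉ interior K) :
    ∃ ν : EuclideanSpace ℝ (Fin 2), ‖ν‖ = 1 ∧ (∀ x ∈ K, ⟪x - s, ν⟫_ℝ ≤ 0) ∧
      ⟪z₀ - s, ν⟫_ℝ < 0 := by
  obtain ⟨f, hf⟩ := geometric_hahn_banach_open_point hKconv.interior isOpen_interior hs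
  set v₁ := (InnerProductSpace.toDual ℝ (EuclideanSpace ℝ (Fin 2))).symm f with hv₁
  have hv₁x : ∀ x, ⟪v₁, x⟫_ℝ = f x := fun x => InnerProductSpace.toDual_symm_apply
  have hv₁0 : v₁ ≠ 0 := by
    intro h
    have h1 := hf z₀ hz₀
    have h2 : f z₀ = ⟪v₁, z₀⟫_ℝ := (hv₁x z₀).symm
    have h3 : f s = ⟪v₁, s⟫_ℝ := (hv₁x s).symm
    rw [h2, h3, h, inner_zero_left, inner_zero_left] at h1
    exact lt_irrefl _ h1
  have hvn : (0:ℝ) < ‖v₁‖ := norm_pos_iff.mpr hv₁0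
  refine ⟨‖v₁‖⁻¹ • v₁, ?_, ?_, ?_⟩
  · rw [norm_smul, norm_inv, Real.norm_eq_abs, abs_of_pos hvn, inv_mul_cancel₀ hvn.ne']
  · intro x hx
    have hint : ∀ y ∈ interior K, ⟪y - s, v₁⟫_ℝ ≤ 0 := by
      intro y hy
      have := hf y hy
      have h2 : ⟪y - s, v₁⟫_ℝ = f y - f s := by
        rw [inner_sub_left, real_inner_comm v₁ y, real_inner_comm v₁ s, hv₁x, hv₁x]
      linarith [h2 ▸ sub_nonpos.mpr this.le]
    have hcl : ∀ y ∈ closure (interior K), ⟪y - s, v₁⟫_ℝ ≤ 0 := by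
      intro y hy
      have hclosed : IsClosed {y : EuclideanSpace ℝ (Fin 2) | ⟪y - s, v₁⟫_ℝ ≤ 0} :=
        isClosed_le ((continuous_id.sub continuous_const).inner continuous_const) continuous_const
      exact closure_minimal hint hclosed hy
    have hx' := hcl x (conv_subset_closure_interior hKconv hz₀ hx)
    rw [real_inner_smul_right]
    exact mul_nonpos_of_nonneg_of_nonpos (inv_nonneg.mpr hvn.le) hx'
  · have h1 := hf z₀ hz₀
    have h2 : ⟪z₀ - s, v₁⟫_ℝ = f z₀ - f s := by
      rw [inner_sub_left, real_inner_comm v₁ z₀, real_inner_comm v₁ s, hv₁x, hv₁x]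
    rw [real_inner_smul_right]
    apply mul_neg_of_pos_of_neg (inv_pos.mpr hvn)
    rw [h2]
    linarith

lemma core2 {K : Set (EuclideanSpace ℝ (Fin 2))} (hKc : IsCompact K) (hKconv : Convex ℝ K)
    {s t z₀ : EuclideanSpace ℝ (Fin 2)} (hz₀ : z₀ ∈ interior K)
    (hs : s ∈ frontier K) (ht : t ∈ frontier K)
    {ε : ℝ} (hε : 0 < ε) {ν w' : EuclideanSpace ℝ (Fin 2)}
    (hsup : ∀ x ∈ K, ⟪x - s, ν⟫_ℝ ≤ 0) (hη : ⟪z₀ - s, ν⟫_ℝ < 0)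
    (hwt : ⟪t - s, w'⟫_ℝ ≤ 0)
    (hnorm : ∀ x : EuclideanSpace ℝ (Fin 2), ‖x‖ ^ 2 = ⟪x, ν⟫_ℝ ^ 2 + ⟪x, w'⟫_ℝ ^ 2) :
    ∃ a₁ a₂ δ : ℝ, 0 < a₁ ∧ a₁ < a₂ ∧ a₂ ≤ π/4 ∧ 0 < δ ∧
      ∀ α d : ℝ, a₁ < α → α < a₂ → 0 < d → d < δ →
        (⟪z₀ - s, ν⟫_ℝ * Real.cos α + ⟪z₀ - s, w'⟫_ℝ * Real.sin α < -δ) ∧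
        ∃ S : Set (EuclideanSpace ℝ (Fin 2)), S ⊆ frontier K ∧ IsConnected S ∧ s ∈ S ∧ t ∈ S ∧
          (∀ x ∈ S, -d ≤ ⟪x - s, ν⟫_ℝ * Real.cos α + ⟪x - s, w'⟫_ℝ * Real.sin α →
            x ∈ Metric.closedBall s ε) := by
  have hKcl : IsClosed K := hKc.isClosed
  have hfrK : frontier K ⊆ K := hKcl.frontier_subset
  have hsK : s ∈ K := hfrK hs
  have htK : t ∈ K := hfrK ht
  set η : ℝ := -⟪z₀ - s, ν⟫_ℝ with hηdef
  have hηpos : 0 < η := by rw [hηdef]; linarith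
  set M₀ : ℝ := ‖z₀ - s‖ with hM₀
  have hM₀0 : 0 ≤ M₀ := norm_nonneg _
  have hYz₀ : |⟪z₀ - s, w'⟫_ℝ| ≤ M₀ := by
    have h := hnorm (z₀ - s)
    rw [abs_le]
    constructor <;> nlinarith [sq_nonneg (⟪z₀ - s, ν⟫_ℝ), norm_nonneg (z₀ - s)]
  have hpi : (0:ℝ) < π := Real.pi_pos
  set a₂ : ℝ := min (π/4) (η/(2*(M₀+1))) with ha₂def
  have ha₂pos : 0 < a₂ := lt_min (by linarith) (by positivity)
  have ha₂le : a₂ ≤ π/4 := min_le_left _ _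
  have ha₂le' : a₂ ≤ η/(2*(M₀+1)) := min_le_right _ _
  set a₁ : ℝ := a₂/2 with ha₁def
  have ha₁pos : 0 < a₁ := by positivity
  set s₁ : ℝ := Real.sin a₁ with hs₁def
  have hs₁pos : 0 < s₁ := Real.sin_pos_of_pos_of_lt_pi ha₁pos (by linarith)
  have hs₁lt : s₁ < a₁ := Real.sin_lt ha₁pos
  set δ : ℝ := min 1 ε * s₁ / 8 with hδdef
  clear_value η M₀ a₂ a₁ s₁ δ
  have hδpos : 0 < δ := by
    have h0 : (0:ℝ) < min 1 ε := lt_min one_pos hε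
    rw [hδdef]
    positivity
  have hδle : δ ≤ ε * s₁ / 8 := by
    have h1 : min 1 ε ≤ ε := min_le_right _ _
    rw [hδdef]
    nlinarith
  refine ⟨a₁, a₂, δ, ha₁pos, by rw [ha₁def]; linarith, ha₂le, hδpos, ?_⟩
  intro α d hα1 hα2 hd0 hdδ
  have hα0 : 0 < α := ha₁pos.trans hα1
  have hαpi4 : α < π/4 := hα2.trans_le ha₂le
  have hcosα : 1/2 ≤ Real.cos α := by
    have h3 : Real.cos (π/3) ≤ Real.cos α :=
      Real.cos_le_cos_of_nonneg_of_le_pi hα0.le (by linarith) (by linarith)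
    rw [Real.cos_pi_div_three] at h3
    exact h3
  have hcosα1 : Real.cos α ≤ 1 := Real.cos_le_one α
  have hsinαpos : 0 < Real.sin α := Real.sin_pos_of_pos_of_lt_pi hα0 (by linarith)
  have hsinα_low : s₁ ≤ Real.sin α := by
    rw [hs₁def]
    exact (Real.sin_lt_sin_of_lt_of_le_pi_div_two (by linarith) (by linarith) hα1).le
  have hsinα_up : Real.sin α < α := Real.sin_lt hα0
  have hsinα1 : Real.sin α ≤ 1 := Real.sin_le_one α
  constructor
  · -- the z₀ estimate
    have h1 : ⟪z₀ - s, ν⟫_ℝ * Real.cos α ≤ -η/2 := by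
      rw [show ⟪z₀ - s, ν⟫_ℝ = -η by rw [hηdef]; ring]
      nlinarith
    have hsinlea : Real.sin α < a₂ := hsinα_up.trans hα2
    have h2 : ⟪z₀ - s, w'⟫_ℝ * Real.sin α ≤ M₀ * a₂ := by
      have hab := abs_le.mp hYz₀
      nlinarith
    have h4 : a₂ * (2*(M₀+1)) ≤ η := by
      have hpos2 : (0:ℝ) < 2*(M₀+1) := by linarith
      exact (le_div_iff₀ hpos2).mp ha₂le'
    have hδa : δ < a₂ := by
      have hm1 : min 1 ε ≤ 1 := min_le_left _ _
      have hm0 : (0:ℝ) < min 1 ε := lt_min one_pos hε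
      have : δ ≤ s₁/8 := by rw [hδdef]; nlinarith
      linarith [hs₁lt, ha₁pos, ha₂pos]
    -- -η/2 + M₀ a₂ ≤ -a₂ < -δ
    nlinarith
  · -- the connected set S
    have key : ∀ S : Set (EuclideanSpace ℝ (Fin 2)), S ⊆ frontier K →
        (∀ x ∈ S, ⟪x - s, w'⟫_ℝ ≤ ε/8) →
        (∀ x ∈ S, -d ≤ ⟪x - s, ν⟫_ℝ * Real.cos α + ⟪x - s, w'⟫_ℝ * Real.sin α →
          x ∈ Metric.closedBall s ε) := by
      intro S hSsub hYS x hxS hineq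
      set X : ℝ := ⟪x - s, ν⟫_ℝ with hX
      set Y : ℝ := ⟪x - s, w'⟫_ℝ with hY
      have hX0 : X ≤ 0 := hsup x (hfrK (hSsub hxS))
      have hY8 : Y ≤ ε/8 := hYS x hxS
      have hδε8 : δ ≤ ε/8 := by
        have h1 : s₁ ≤ 1 := by linarith [hsinα_low, hsinα1]
        have h2 : min 1 ε ≤ ε := min_le_right _ _
        have h3 : (0:ℝ) < min 1 ε := lt_min one_pos hε
        rw [hδdef]
        nlinarith
      -- bound on -X
      have hXbound : -X ≤ ε/2 := by
        have h2 : Real.sin α * Y ≤ ε/8 := by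
          rcases le_or_gt 0 Y with h | h
          · nlinarith
          · nlinarith
        nlinarith
      -- bound on Y from below
      have hYlow : -(ε/8) ≤ Y := by
        by_contra h
        push_neg at h
        have h1 : Real.sin α * Y ≤ s₁ * Y := by nlinarith
        have h2 : s₁ * Y < s₁ * (-(ε/8)) := by nlinarith
        have h3 : δ ≤ ε * s₁ / 8 := hδle
        have h4 : Real.cos α * X ≤ 0 := by nlinarith
        nlinarith
      rw [Metric.mem_closedBall, dist_eq_norm]
      have h5 := hnorm (x - s)
      nlinarith [norm_nonneg (x - s)]
    by_cases hcut : ∃ z ∈ interior K, 0 < ⟪z - s, w'⟫_ℝ ∧ ⟪z - s, w'⟫_ℝ < ε/8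
    · obtain ⟨z, hzint, hz1, hz2⟩ := hcut
      set S : Set (EuclideanSpace ℝ (Fin 2)) := frontier K ∩ {x | ⟪x - z, w'⟫_ℝ ≤ 0} with hSdef
      have hSsub : S ⊆ frontier K := inter_subset_left
      have hYS : ∀ x ∈ S, ⟪x - s, w'⟫_ℝ ≤ ε/8 := by
        rintro x ⟨-, hx2⟩
        have hid : ⟪x - s, w'⟫_ℝ = ⟪x - z, w'⟫_ℝ + ⟪z - s, w'⟫_ℝ := by
          rw [← inner_add_left]
          congr 1
          abel
        rw [hid]
        have : ⟪x - z, w'⟫_ℝ ≤ 0 := hx2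
        linarith
      refine ⟨S, hSsub, connected_cut hKc hKconv hzint w', ⟨hs, ?_⟩, ⟨ht, ?_⟩, key S hSsub hYS⟩
      · show ⟪s - z, w'⟫_ℝ ≤ 0
        have : s - z = -(z - s) := by abel
        rw [this, inner_neg_left]
        linarith
      · show ⟪t - z, w'⟫_ℝ ≤ 0
        have hid : ⟪t - z, w'⟫_ℝ = ⟪t - s, w'⟫_ℝ - ⟪z - s, w'⟫_ℝ := by
          rw [← inner_sub_left]
          congr 1
          abel
        rw [hid]
        linarith
    · -- no cut needed: w'-coordinate is ≤ 0 on all of K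
      push_neg at hcut
      have hYK : ∀ x ∈ K, ⟪x - s, w'⟫_ℝ ≤ 0 := by
        intro x hx
        by_contra hpos
        push_neg at hpos
        set tgt : ℝ := min (ε/8) (⟪x - s, w'⟫_ℝ) / 2 with htgt
        clear_value tgt
        have htgtpos : 0 < tgt := by
          have h0 : (0:ℝ) < min (ε/8) (⟪x - s, w'⟫_ℝ) := lt_min (by linarith) hpos
          rw [htgt]
          positivity
        have hscl : s ∈ closure (interior K) := conv_subset_closure_interior hKconv hz₀ hsK
        obtain ⟨z₁, hz₁int, hz₁d⟩ := Metric.mem_closure_iff.mp hscl tgt htgtpos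
        have hz₁Y : ⟪z₁ - s, w'⟫_ℝ < tgt := by
          have h1 := hnorm (z₁ - s)
          have h2 : ‖z₁ - s‖ < tgt := by
            rw [← dist_eq_norm, dist_comm]
            exact hz₁d
          nlinarith [sq_nonneg (⟪z₁ - s, ν⟫_ℝ), norm_nonneg (z₁ - s), htgtpos]
        set f : ℝ → ℝ := fun l => ⟪((1 - l) • z₁ + l • x) - s, w'⟫_ℝ with hf
        have hfcont : Continuous f := by
          have hg : Continuous fun l : ℝ => ((1 - l) • z₁ + l • x) - s :=
            (((continuous_const.sub continuous_id).smul continuous_const).add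
              (continuous_id.smul continuous_const)).sub continuous_const
          exact hg.inner continuous_const
        have hf0 : f 0 = ⟪z₁ - s, w'⟫_ℝ := by simp [hf]
        have hf1 : f 1 = ⟪x - s, w'⟫_ℝ := by simp [hf]
        have hmem : tgt ∈ Icc (f 0) (f 1) := by
          rw [hf0, hf1]
          constructor
          · linarith
          · rw [htgt]
            have : min (ε/8) (⟪x - s, w'⟫_ℝ) ≤ ⟪x - s, w'⟫_ℝ := min_le_right _ _
            linarith
        obtain ⟨l, hlI, hfl⟩ := intermediate_value_Icc (by norm_num : (0:ℝ) ≤ 1)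
          hfcont.continuousOn hmem
        have hl1 : l < 1 := by
          rcases lt_or_eq_of_le hlI.2 with h | h
          · exact h
          · exfalso
            rw [h, hf1] at hfl
            rw [htgt] at hfl
            have : min (ε/8) (⟪x - s, w'⟫_ℝ) ≤ ⟪x - s, w'⟫_ℝ := min_le_right _ _
            linarith
        have hzint : (1 - l) • z₁ + l • x ∈ interior K :=
          hKconv.combo_interior_closure_mem_interior hz₁int (subset_closure hx)
            (by linarith) hlI.1 (by ring)
        have := hcut _ hzint
        rw [show ⟪(1 - l) • z₁ + l • x - s, w'⟫_ℝ = f l from rfl, hfl] at this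
        have h9 : tgt < ε/8 := by
          rw [htgt]
          have : min (ε/8) (⟪x - s, w'⟫_ℝ) ≤ ε/8 := min_le_left _ _
          linarith
        linarith [this htgtpos]
      set S : Set (EuclideanSpace ℝ (Fin 2)) := frontier K with hSdef
      have hSeq : S = frontier K ∩ {x | ⟪x - z₀, (0:EuclideanSpace ℝ (Fin 2))⟫_ℝ ≤ 0} := by
        rw [hSdef]
        ext y
        simp [inner_zero_right]
      have hconn : IsConnected S := by
        rw [hSeq]
        exact connected_cut hKc hKconv hz₀ 0
      have hYS : ∀ x ∈ S, ⟪x - s, w'⟫_ℝ ≤ ε/8 := fun x hx =>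
        (hYK x (hfrK hx)).trans (by linarith)
      exact ⟨S, Subset.rfl, hconn, hs, ht, key S Subset.rfl hYS⟩
/-- Theorem 4(1) of the paper for a convex two-route network: protection of a part
containing a neighbourhood of the terminal `s` in the network strictly improves the
probability of connecting `s` and `t` over the weakest arrangement. -/
theorem stmt_12 (Ω K : Set (EuclideanSpace ℝ (Fin 2)))
    (hΩc : IsCompact Ω) (hΩconv : Convex ℝ Ω) (hΩint : (interior Ω).Nonempty)
    (hKc : IsCompact K) (hKconv : Convex ℝ K) (hKint : (interior K).Nonempty)
    (hKΩ : K ⊆ Ω)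
    (s t : EuclideanSpace ℝ (Fin 2)) (hs : s ∈ frontier K) (ht : t ∈ frontier K)
    (hst : s ≠ t) (ε : ℝ) (hε : 0 < ε) (htfar : t ∉ Metric.closedBall s ε)
    (Γ : Set (EuclideanSpace ℝ (Fin 2)))
    (hΓ : frontier K ∩ Metric.closedBall s ε ⊆ Γ) :
    volume {p : ℝ × ℝ | p ∈ Set.Ico 0 (2 * Real.pi) ×ˢ (Set.univ : Set ℝ) ∧
        (G p.1 p.2 ∩ Ω).Nonempty ∧
        ¬ ∃ S : Set (EuclideanSpace ℝ (Fin 2)), S ⊆ frontier K ∧ IsConnected S ∧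
          s ∈ S ∧ t ∈ S ∧ (S \ Γ) ∩ R p.1 p.2 = ∅}
      < volume {p : ℝ × ℝ | p ∈ Set.Ico 0 (2 * Real.pi) ×ˢ (Set.univ : Set ℝ) ∧
        (G p.1 p.2 ∩ Ω).Nonempty ∧
        ¬ ∃ S : Set (EuclideanSpace ℝ (Fin 2)), S ⊆ frontier K ∧ IsConnected S ∧
          s ∈ S ∧ t ∈ S ∧ S ∩ R p.1 p.2 = ∅} := by
  classical
  set A' : Set (ℝ × ℝ) := {p : ℝ × ℝ | p ∈ Set.Ico 0 (2 * Real.pi) ×ˢ (Set.univ : Set ℝ) ∧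
      (G p.1 p.2 ∩ Ω).Nonempty ∧
      ¬ ∃ S : Set (EuclideanSpace ℝ (Fin 2)), S ⊆ frontier K ∧ IsConnected S ∧
        s ∈ S ∧ t ∈ S ∧ (S \ Γ) ∩ R p.1 p.2 = ∅} with hA'def
  set A : Set (ℝ × ℝ) := {p : ℝ × ℝ | p ∈ Set.Ico 0 (2 * Real.pi) ×ˢ (Set.univ : Set ℝ) ∧
      (G p.1 p.2 ∩ Ω).Nonempty ∧
      ¬ ∃ S : Set (EuclideanSpace ℝ (Fin 2)), S ⊆ frontier K ∧ IsConnected S ∧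
        s ∈ S ∧ t ∈ S ∧ S ∩ R p.1 p.2 = ∅} with hAdef
  show volume A' < volume A
  have hA'A : A' ⊆ A := by
    rintro p ⟨h1, h2, h3⟩
    refine ⟨h1, h2, ?_⟩
    rintro ⟨S, hS1, hS2, hS3, hS4, hS5⟩
    refine h3 ⟨S, hS1, hS2, hS3, hS4, ?_⟩
    apply eq_empty_of_subset_empty
    rw [← hS5]
    exact inter_subset_inter_left _ diff_subset
  -- finiteness
  obtain ⟨M, hM⟩ := hΩc.isBounded.subset_closedBall 0
  have hAbox : A ⊆ Set.Ico 0 (2 * Real.pi) ×ˢ Icc (-M) M := by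
    rintro ⟨θ, ρ⟩ ⟨h1, ⟨x, hxG, hxΩ⟩, -⟩
    refine ⟨h1.1, ?_⟩
    have hx : ‖x‖ ≤ M := by
      have := hM hxΩ
      simpa [Metric.mem_closedBall, dist_eq_norm] using this
    have h2 : |⟪x, u θ⟫_ℝ| ≤ ‖x‖ * ‖u θ‖ := abs_real_inner_le_norm x (u θ)
    rw [norm_u, mul_one] at h2
    have h3 : ⟪x, u θ⟫_ℝ = ρ := hxG
    rw [h3] at h2
    have h4 := abs_le.mp (h2.trans hx)
    exact ⟨h4.1, h4.2⟩
  have hA'fin : volume A' ≠ ⊤ := by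
    have h1 : volume A' ≤ volume (Set.Ico 0 (2 * Real.pi) ×ˢ Icc (-M) M) :=
      measure_mono (hA'A.trans hAbox)
    have h2 : volume (Set.Ico 0 (2 * Real.pi) ×ˢ Icc (-M) M) < ⊤ := by
      rw [Measure.volume_eq_prod, Measure.prod_prod, Real.volume_Ico, Real.volume_Icc]
      exact ENNReal.mul_lt_top ENNReal.ofReal_lt_top ENNReal.ofReal_lt_top
    exact (h1.trans_lt h2).ne
  -- set up the geometric data
  obtain ⟨z₀, hz₀⟩ := hKint
  have hKcl : IsClosed K := hKc.isClosed
  have hsK : s ∈ K := hKcl.frontier_subset hs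
  have hsni : s ∉ interior K := by
    have hs' := hs
    rw [hKcl.frontier_eq] at hs'
    exact hs'.2
  obtain ⟨ν, hν1, hνsup, hνz₀⟩ := support_at_frontier hKconv hz₀ hsni
  have hνsq : ν 0 ^ 2 + ν 1 ^ 2 = 1 := by
    have h2 : ⟪ν, ν⟫_ℝ = 1 := by
      rw [real_inner_self_eq_norm_sq, hν1]; norm_num
    rw [← h2]
    simp only [PiLp.inner_apply, Fin.sum_univ_two, RCLike.inner_apply, conj_trivial]
    ring
  obtain ⟨θ₀, -, -, hθc, hθs⟩ := exists_angle (ν 0) (ν 1) hνsq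
  have huν : u θ₀ = ν := by
    ext i
    fin_cases i <;> simp [u, hθc, hθs]
  set w : EuclideanSpace ℝ (Fin 2) := u (θ₀ + π/2) with hwdef
  set w' : EuclideanSpace ℝ (Fin 2) := if ⟪t - s, w⟫_ℝ ≤ 0 then w else -w with hw'def
  have hwt' : ⟪t - s, w'⟫_ℝ ≤ 0 := by
    rw [hw'def]
    split_ifs with h
    · exact h
    · rw [inner_neg_right]
      push_neg at h
      linarith
  have hnorm' : ∀ x : EuclideanSpace ℝ (Fin 2), ‖x‖ ^ 2 = ⟪x, ν⟫_ℝ ^ 2 + ⟪x, w'⟫_ℝ ^ 2 := by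
    intro x
    have h0 := norm_sq_decomp x θ₀
    rw [huν] at h0
    rw [hw'def]
    split_ifs with h
    · exact h0
    · rw [inner_neg_right, neg_sq]
      exact h0
  obtain ⟨a₁, a₂, δ, ha₁, ha₁₂, ha₂, hδpos, hmain⟩ :=
    core2 hKc hKconv hz₀ hs ht hε hνsup hνz₀ hwt' hnorm'
  -- raw angle interval
  have hinterval : ∃ l r : ℝ, l < r ∧ ∀ θ ∈ Ioo l r, ∃ α, a₁ < α ∧ α < a₂ ∧
      ∀ x : EuclideanSpace ℝ (Fin 2),
        ⟪x, u θ⟫_ℝ = ⟪x, ν⟫_ℝ * Real.cos α + ⟪x, w'⟫_ℝ * Real.sin α := by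
    by_cases hcase : ⟪t - s, w⟫_ℝ ≤ 0
    · refine ⟨θ₀ + a₁, θ₀ + a₂, by linarith, fun θ hθ => ⟨θ - θ₀, by
        obtain ⟨h1, h2⟩ := hθ; exact by linarith, by
        obtain ⟨h1, h2⟩ := hθ; exact by linarith, fun x => ?_⟩⟩
      have hdec := u_decomp θ₀ (θ - θ₀)
      rw [show θ₀ + (θ - θ₀) = θ by ring] at hdec
      rw [hdec, inner_add_right, real_inner_smul_right, real_inner_smul_right, huν]
      have hww' : w' = w := by rw [hw'def, if_pos hcase]
      rw [← hwdef, hww']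
      ring
    · refine ⟨θ₀ - a₂, θ₀ - a₁, by linarith, fun θ hθ => ⟨θ₀ - θ, by
        obtain ⟨h1, h2⟩ := hθ; exact by linarith, by
        obtain ⟨h1, h2⟩ := hθ; exact by linarith, fun x => ?_⟩⟩
      have hdec := u_decomp θ₀ (θ - θ₀)
      rw [show θ₀ + (θ - θ₀) = θ by ring] at hdec
      rw [hdec, inner_add_right, real_inner_smul_right, real_inner_smul_right, huν]
      have hww' : w' = -w := by rw [hw'def, if_neg hcase]
      rw [← hwdef, hww', inner_neg_right]
      rw [show θ - θ₀ = -(θ₀ - θ) by ring, Real.cos_neg, Real.sin_neg]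
      ring
  obtain ⟨l, r, hlr, hAng⟩ := hinterval
  -- shift interval into [0, 2π)
  have h2pi : (0:ℝ) < 2 * π := by linarith [Real.pi_pos]
  set m : ℝ := (l + r)/2 with hm
  set k : ℤ := ⌊m / (2 * π)⌋ with hk
  set m' : ℝ := m - k * (2 * π) with hm'
  have hm'0 : 0 ≤ m' := Int.sub_floor_div_mul_nonneg m h2pi
  have hm'2π : m' < 2 * π := Int.sub_floor_div_mul_lt m h2pi
  set r' : ℝ := min (2 * π) (m' + (r - l)/2) with hr'
  have hm'r' : m' < r' := lt_min hm'2π (by linarith)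
  have hr'le : r' ≤ 2 * π := min_le_left _ _
  have hshift : ∀ θ ∈ Ioo m' r', (θ + k * (2 * π)) ∈ Ioo l r ∧ u θ = u (θ + k * (2 * π)) := by
    intro θ hθ
    obtain ⟨h1, h2⟩ := hθ
    have h3 : θ < m' + (r - l)/2 := lt_of_lt_of_le h2 (min_le_right _ _)
    have e1 : m' = m - k * (2 * π) := hm'
    have e2 : m = (l + r)/2 := hm
    constructor
    · exact ⟨by linarith, by linarith⟩
    · have := u_eq_of_sub_int_mul (θ + k * (2 * π)) k
      rw [add_sub_cancel_right] at this
      exact this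
  -- the good open set B
  set gf : ℝ → ℝ := fun θ => ⟪s, u θ⟫_ℝ with hgf
  have hgcont : Continuous gf := continuous_const.inner continuous_u
  set B : Set (ℝ × ℝ) := {p : ℝ × ℝ | p.1 ∈ Ioo m' r'} ∩
      ({p : ℝ × ℝ | gf p.1 - δ < p.2} ∩ {p : ℝ × ℝ | p.2 < gf p.1}) with hB
  have hBopen : IsOpen B := by
    refine IsOpen.inter (isOpen_Ioo.preimage continuous_fst) (IsOpen.inter ?_ ?_)
    · exact isOpen_lt ((hgcont.comp continuous_fst).sub continuous_const) continuous_snd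
    · exact isOpen_lt continuous_snd (hgcont.comp continuous_fst)
  have hBne : B.Nonempty := by
    refine ⟨((m' + r')/2, gf ((m' + r')/2) - δ/2), ?_, ?_, ?_⟩
    · exact ⟨by linarith, by linarith⟩
    · simp only [mem_setOf_eq]; linarith
    · simp only [mem_setOf_eq]; linarith
  have hBpos : 0 < volume B := hBopen.measure_pos volume hBne
  -- main property of B
  have hBprop : ∀ p ∈ B, p ∈ A ∧ p ∉ A' := by
    rintro ⟨θ, ρ⟩ ⟨hθB, hρ1, hρ2⟩
    simp only [mem_setOf_eq] at hθB hρ1 hρ2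
    obtain ⟨hθIoo, hueq⟩ := hshift θ hθB
    obtain ⟨α, hα1, hα2, hdecomp⟩ := hAng _ hθIoo
    have hdecompθ : ∀ x : EuclideanSpace ℝ (Fin 2),
        ⟪x, u θ⟫_ℝ = ⟪x, ν⟫_ℝ * Real.cos α + ⟪x, w'⟫_ℝ * Real.sin α := by
      intro x
      rw [hueq]
      exact hdecomp x
    set d : ℝ := gf θ - ρ with hd
    have hd0 : 0 < d := by rw [hd]; linarith
    have hdδ : d < δ := by rw [hd]; linarith
    obtain ⟨hz₀est, S, hSsub, hSconn, hsS, htS, hScap⟩ := hmain α d hα1 hα2 hd0 hdδ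
    -- s ∈ R θ ρ
    have hsR : s ∈ R θ ρ := by
      show ⟪s, u θ⟫_ℝ ≥ ρ
      have : gf θ = ⟪s, u θ⟫_ℝ := rfl
      linarith [hρ2, this ▸ le_refl (gf θ)]
    -- G θ ρ ∩ Ω is nonempty
    have hGΩ : (G θ ρ ∩ Ω).Nonempty := by
      have hz₀val : ⟪z₀, u θ⟫_ℝ < ρ := by
        have h1 : ⟪z₀ - s, u θ⟫_ℝ < -δ := by
          rw [hdecompθ (z₀ - s)]
          exact hz₀est
        have h2 : ⟪z₀, u θ⟫_ℝ = ⟪s, u θ⟫_ℝ + ⟪z₀ - s, u θ⟫_ℝ := by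
          rw [← inner_add_left]
          congr 1
          abel
        have h3 : gf θ = ⟪s, u θ⟫_ℝ := rfl
        rw [h2]
        linarith
      set f : ℝ → ℝ := fun lam => ⟪(1 - lam) • z₀ + lam • s, u θ⟫_ℝ with hf
      have hfcont : Continuous f := by
        have hg2 : Continuous fun lam : ℝ => (1 - lam) • z₀ + lam • s :=
          ((continuous_const.sub continuous_id).smul continuous_const).add
            (continuous_id.smul continuous_const)
        exact hg2.inner continuous_const
      have hf0 : f 0 = ⟪z₀, u θ⟫_ℝ := by simp [hf]
      have hf1 : f 1 = ⟪s, u θ⟫_ℝ := by simp [hf]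
      have hmem : ρ ∈ Icc (f 0) (f 1) := by
        rw [hf0, hf1]
        have h3 : gf θ = ⟪s, u θ⟫_ℝ := rfl
        exact ⟨hz₀val.le, by linarith⟩
      obtain ⟨lam, hlamI, hflam⟩ := intermediate_value_Icc (by norm_num : (0:ℝ) ≤ 1)
        hfcont.continuousOn hmem
      refine ⟨(1 - lam) • z₀ + lam • s, hflam, ?_⟩
      apply hKΩ
      exact hKconv (interior_subset hz₀) hsK (by linarith [hlamI.2]) hlamI.1 (by ring)
    -- membership in A
    have hθ0 : 0 ≤ θ := le_of_lt (lt_of_le_of_lt hm'0 hθB.1)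
    have hθ2π : θ < 2 * π := lt_of_lt_of_le hθB.2 hr'le
    have hpA : (θ, ρ) ∈ A := by
      refine ⟨⟨⟨hθ0, hθ2π⟩, mem_univ _⟩, hGΩ, ?_⟩
      rintro ⟨S', hS'1, hS'2, hS'3, hS'4, hS'5⟩
      have : s ∈ S' ∩ R θ ρ := ⟨hS'3, hsR⟩
      rw [hS'5] at this
      exact this
    -- not in A'
    have hpA' : (θ, ρ) ∉ A' := by
      intro hmem'
      apply hmem'.2.2
      refine ⟨S, hSsub, hSconn, hsS, htS, ?_⟩
      rw [eq_empty_iff_forall_notMem]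
      rintro x ⟨⟨hxS, hxΓ⟩, hxR⟩
      apply hxΓ
      apply hΓ
      refine ⟨hSsub hxS, ?_⟩
      apply hScap x hxS
      have h1 : ⟪x, u θ⟫_ℝ ≥ ρ := hxR
      have h2 : ⟪x - s, u θ⟫_ℝ = ⟪x, u θ⟫_ℝ - ⟪s, u θ⟫_ℝ := by
        rw [inner_sub_left]
      have h3 : gf θ = ⟪s, u θ⟫_ℝ := rfl
      have h4 : -d ≤ ⟪x - s, u θ⟫_ℝ := by
        rw [h2, hd]
        linarith
      rw [hdecompθ (x - s)] at h4
      exact h4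
    exact ⟨hpA, hpA'⟩
  -- conclude
  have hdisj : Disjoint A' B := by
    rw [disjoint_left]
    intro p hpA' hpB
    exact (hBprop p hpB).2 hpA'
  have hunion : A' ∪ B ⊆ A := by
    intro p hp
    rcases hp with hp | hp
    · exact hA'A hp
    · exact (hBprop p hp).1
  calc volume A' < volume A' + volume B := ENNReal.lt_add_right hA'fin hBpos.ne'
  _ = volume (A' ∪ B) := (measure_union hdisj hBopen.measurableSet).symm
  _ ≤ volume A := measure_mono hunion
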